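/- Let n be a natural number and let X, Y, Z be nonzero n×n complex matrices. Then sin Θ(X,Y) ≤ sin Θ(X,Z) + sin Θ(Z,Y). -/

import Mathlib

open Matrix
open scoped ComplexOrder

/-- Hilbert–Schmidt (Frobenius) norm: ‖X‖₂ = √(Re Tr(XᴴX)). -/
noncomputable def hsNorm {n : ℕ} (X : Matrix (Fin n) (Fin n) ℂ) : ℝ :=
  Real.sqrt ((Matrix.trace (Xᴴ * X)).re)

/-- Angle Θ(X,Y) = arccos(Re Tr(YᴴX) / (‖X‖₂‖Y‖₂)). -/
noncomputable def theta {n : ℕ} (X Y : Matrix (Fin n) (Fin n) ℂ) : ℝ :=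
  Real.arccos ((Matrix.trace (Yᴴ * X)).re / (hsNorm X * hsNorm Y))

/-- |X| : the positive semidefinite square root of XᴴX. -/
noncomputable def matAbs {n : ℕ} (X : Matrix (Fin n) (Fin n) ℂ) : Matrix (Fin n) (Fin n) ℂ :=
  ((Matrix.posSemidef_conjTranspose_mul_self X).1.eigenvectorUnitary : Matrix (Fin n) (Fin n) ℂ) *
    diagonal ((↑) ∘ (√·) ∘ (Matrix.posSemidef_conjTranspose_mul_self X).1.eigenvalues) *
    (star (Matrix.posSemidef_conjTranspose_mul_self X).1.eigenvectorUnitary : Matrix (Fin n) (Fin n) ℂ)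

open scoped RealInnerProductSpace

/-- Key real-algebra lemma: the sine triangle inequality reduces to this inequality
on cosines, given the Gram-determinant constraint. -/
lemma key_alg {a b c : ℝ} (hb : b^2 ≤ 1) (hc : c^2 ≤ 1)
    (h : (a - b*c)^2 ≤ (1 - b^2) * (1 - c^2)) :
    Real.sqrt (1 - a^2) ≤ Real.sqrt (1 - b^2) + Real.sqrt (1 - c^2) := by
  have hu : (0:ℝ) ≤ 1 - b^2 := by linarith
  have hv : (0:ℝ) ≤ 1 - c^2 := by linarith
  set s : ℝ := Real.sqrt (1 - b^2) * Real.sqrt (1 - c^2) with hs_def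
  have hs0 : 0 ≤ s := by positivity
  have hs2 : s^2 = (1 - b^2) * (1 - c^2) := by
    rw [hs_def, mul_pow, Real.sq_sqrt hu, Real.sq_sqrt hv]
  have ht2 : (a - b*c)^2 ≤ s^2 := by rw [hs2]; exact h
  have hbc : (b*c)^2 ≤ 1 := by nlinarith
  have hbct2 : (b*c*(a - b*c))^2 ≤ s^2 := by
    calc (b*c*(a - b*c))^2 = (b*c)^2 * (a - b*c)^2 := by ring
    _ ≤ 1 * s^2 := by
        apply mul_le_mul hbc ht2 (sq_nonneg _) zero_le_one
    _ = s^2 := one_mul _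
  have hbct : -s ≤ b*c*(a - b*c) := by nlinarith [sq_nonneg (b*c*(a-b*c) + s)]
  have key : 1 - a^2 ≤ (Real.sqrt (1 - b^2) + Real.sqrt (1 - c^2))^2 := by
    have expand : (Real.sqrt (1 - b^2) + Real.sqrt (1 - c^2))^2
        = (1 - b^2) + (1 - c^2) + 2*s := by
      rw [add_sq, Real.sq_sqrt hu, Real.sq_sqrt hv]; ring
    rw [expand]
    nlinarith [sq_nonneg (a - b*c), hbct, hs2]
  calc Real.sqrt (1 - a^2) ≤ Real.sqrt ((Real.sqrt (1 - b^2) + Real.sqrt (1 - c^2))^2) :=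
        Real.sqrt_le_sqrt key
  _ = Real.sqrt (1 - b^2) + Real.sqrt (1 - c^2) := Real.sqrt_sq (by positivity)

section Abstract
variable {F : Type*} [NormedAddCommGroup F] [InnerProductSpace ℝ F]

/-- Gram-determinant constraint for three unit vectors (via Cauchy–Schwarz for the
components of `x`, `y` orthogonal to `z`). -/
lemma gram {x y z : F} (hx : ‖x‖ = 1) (hy : ‖y‖ = 1) (hz : ‖z‖ = 1) :
    (⟪x, y⟫ - ⟪x, z⟫ * ⟪z, y⟫)^2 ≤ (1 - ⟪x, z⟫^2) * (1 - ⟪z, y⟫^2) := by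
  have hxx : ⟪x, x⟫ = 1 := by rw [real_inner_self_eq_norm_sq, hx]; norm_num
  have hyy : ⟪y, y⟫ = 1 := by rw [real_inner_self_eq_norm_sq, hy]; norm_num
  have hzz : ⟪z, z⟫ = 1 := by rw [real_inner_self_eq_norm_sq, hz]; norm_num
  have hyz : ⟪y, z⟫ = ⟪z, y⟫ := real_inner_comm _ _
  have hzx : ⟪z, x⟫ = ⟪x, z⟫ := real_inner_comm _ _
  have hyx : ⟪y, x⟫ = ⟪x, y⟫ := real_inner_comm _ _
  have cs := real_inner_mul_inner_self_le (x - ⟪x, z⟫ • z) (y - ⟪z, y⟫ • z)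
  simp only [inner_sub_left, inner_sub_right, real_inner_smul_left, real_inner_smul_right,
    hzz, hxx, hyy, hyz, hzx, hyx, mul_one] at cs
  nlinarith [cs]

/-- Sine triangle inequality for the (unoriented) angle in a real inner product space. -/
lemma sin_arccos_tri (x y z : F) (hx : x ≠ 0) (hy : y ≠ 0) (hz : z ≠ 0) :
    Real.sin (Real.arccos (⟪x, y⟫ / (‖x‖ * ‖y‖)))
      ≤ Real.sin (Real.arccos (⟪x, z⟫ / (‖x‖ * ‖z‖)))
        + Real.sin (Real.arccos (⟪z, y⟫ / (‖z‖ * ‖y‖))) := by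
  have hxn : ‖x‖ ≠ 0 := norm_ne_zero_iff.mpr hx
  have hyn : ‖y‖ ≠ 0 := norm_ne_zero_iff.mpr hy
  have hzn : ‖z‖ ≠ 0 := norm_ne_zero_iff.mpr hz
  set x' : F := ‖x‖⁻¹ • x with hx'
  set y' : F := ‖y‖⁻¹ • y with hy'
  set z' : F := ‖z‖⁻¹ • z with hz'
  have nx : ‖x'‖ = 1 := by
    rw [hx', norm_smul, norm_inv, norm_norm, inv_mul_cancel₀ hxn]
  have ny : ‖y'‖ = 1 := by
    rw [hy', norm_smul, norm_inv, norm_norm, inv_mul_cancel₀ hyn]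
  have nz : ‖z'‖ = 1 := by
    rw [hz', norm_smul, norm_inv, norm_norm, inv_mul_cancel₀ hzn]
  have ip : ∀ (u v : F) (hu : ‖u‖ ≠ 0) (hv : ‖v‖ ≠ 0),
      ⟪(‖u‖⁻¹ • u : F), (‖v‖⁻¹ • v : F)⟫ = ⟪u, v⟫ / (‖u‖ * ‖v‖) := by
    intro u v hu hv
    rw [real_inner_smul_left, real_inner_smul_right]
    field_simp
  rw [← ip x y hxn hyn, ← ip x z hxn hzn, ← ip z y hzn hyn]
  rw [Real.sin_arccos, Real.sin_arccos, Real.sin_arccos]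
  have hb : ⟪x', z'⟫^2 ≤ 1 := by
    have h1 : |⟪x', z'⟫| ≤ 1 := by
      have := abs_real_inner_le_norm x' z'
      rwa [nx, nz, mul_one] at this
    nlinarith [abs_nonneg ⟪x', z'⟫, sq_abs ⟪x', z'⟫]
  have hc : ⟪z', y'⟫^2 ≤ 1 := by
    have h1 : |⟪z', y'⟫| ≤ 1 := by
      have := abs_real_inner_le_norm z' y'
      rwa [nz, ny, mul_one] at this
    nlinarith [abs_nonneg ⟪z', y'⟫, sq_abs ⟪z', y'⟫]
  exact key_alg hb hc (gram nx ny nz)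

end Abstract

/-- Embedding of complex matrices into a real Euclidean space realizing the
Hilbert–Schmidt inner product. -/
noncomputable def embM {n : ℕ} (X : Matrix (Fin n) (Fin n) ℂ) :
    EuclideanSpace ℝ ((Fin n × Fin n) × Fin 2) :=
  WithLp.toLp 2 (fun p => if p.2 = 0 then (X p.1.1 p.1.2).re else (X p.1.1 p.1.2).im)

lemma embM_inner {n : ℕ} (X Y : Matrix (Fin n) (Fin n) ℂ) :
    ⟪embM Y, embM X⟫ = (Matrix.trace (Yᴴ * X)).re := by
  have lhs : ⟪embM Y, embM X⟫
      = ∑ p : (Fin n × Fin n) × Fin 2, embM Y p * embM X p := by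
    simp [PiLp.inner_apply, RCLike.inner_apply, mul_comm]
  rw [lhs, Fintype.sum_prod_type]
  simp only [Fin.sum_univ_two, embM, PiLp.toLp_apply]
  simp only [Matrix.trace, Matrix.diag, Matrix.mul_apply, Matrix.conjTranspose_apply,
    Complex.re_sum, Complex.mul_re, Complex.conj_re, Complex.conj_im]
  rw [Fintype.sum_prod_type, Finset.sum_comm]
  simp [mul_comm]

lemma embM_norm {n : ℕ} (X : Matrix (Fin n) (Fin n) ℂ) : ‖embM X‖ = hsNorm X := by
  rw [@norm_eq_sqrt_real_inner, embM_inner, hsNorm]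

lemma embM_ne_zero {n : ℕ} {X : Matrix (Fin n) (Fin n) ℂ} (hX : X ≠ 0) : embM X ≠ 0 := by
  intro h
  apply hX
  ext i j
  have h0 := congrArg (fun v => v ((i, j), 0)) h
  have h1 := congrArg (fun v => v ((i, j), 1)) h
  simp [embM] at h0 h1
  exact Complex.ext h0 h1

theorem stmt_4 {n : ℕ} (X Y Z : Matrix (Fin n) (Fin n) ℂ)
    (hX : X ≠ 0) (hY : Y ≠ 0) (hZ : Z ≠ 0) :
    Real.sin (theta X Y) ≤ Real.sin (theta X Z) + Real.sin (theta Z Y) := by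
  have h := sin_arccos_tri (embM X) (embM Y) (embM Z)
    (embM_ne_zero hX) (embM_ne_zero hY) (embM_ne_zero hZ)
  rw [real_inner_comm (embM Y) (embM X), real_inner_comm (embM Z) (embM X),
    real_inner_comm (embM Y) (embM Z)] at h
  simp only [embM_inner, embM_norm] at h
  simpa only [theta] using h
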